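/- Let H be a complex Hilbert space of dimension greater than one. There is no unit vector β ∈ H, complex Hilbert space K, unit vector ρ ∈ K, function f from unit vectors of H to unit vectors of K, and linear isometry U : H ⊗ H ⊗ K → H ⊗ H ⊗ K such that U(ψ ⊗ β ⊗ ρ) = ψ ⊗ ψ ⊗ f(ψ) for all unit vectors ψ ∈ H. -/

import Mathlib

open scoped TensorProduct

local notation "⟪" x ", " y "⟫" => @inner ℂ _ _ x y

lemma exists_ortho_pair' {H : Type*} [NormedAddCommGroup H] [InnerProductSpace ℂ H]
    (hdim : 1 < Module.rank ℂ H) :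
    ∃ e₁ e₂ : H, ‖e₁‖ = 1 ∧ ‖e₂‖ = 1 ∧ ⟪e₁, e₂⟫ = 0 := by
  have : Nontrivial H := by
    rw [← rank_pos_iff_nontrivial (R := ℂ)]
    exact lt_trans one_pos hdim
  obtain ⟨x, hx⟩ := exists_ne (0 : H)
  obtain ⟨y, hy⟩ := exists_linearIndependent_pair_of_one_lt_rank hdim hx
  haveI : WellFoundedLT (Fin 2) := Finite.to_wellFoundedLT
  have hon : Orthonormal ℂ (InnerProductSpace.gramSchmidtNormed ℂ ![x, y]) :=
    InnerProductSpace.gramSchmidtNormed_orthonormal (𝕜 := ℂ) (ι := Fin 2) hy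
  exact ⟨_, _, hon.1 0, hon.1 1, hon.2 (by decide)⟩

/-- Expanded quantum no-cloning theorem: if `dim H > 1`, there is no unit vector `β ∈ H`,
complex Hilbert space `K`, unit vector `ρ ∈ K`, function `f` from unit vectors of `H` to
unit vectors of `K`, and linear isometry `U : H ⊗ H ⊗ K → H ⊗ H ⊗ K` (isometry with
respect to the induced inner product `ip`, satisfying
`ip (a ⊗ b ⊗ c) (a' ⊗ b' ⊗ c') = ⟪a,a'⟫⟪b,b'⟫⟪c,c'⟫`) with
`U (ψ ⊗ β ⊗ ρ) = ψ ⊗ ψ ⊗ f ψ` for all unit vectors `ψ`. -/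
theorem no_cloning_expanded_quantum
    {H : Type*} [NormedAddCommGroup H] [InnerProductSpace ℂ H]
    (hdim : 1 < Module.rank ℂ H) :
    ¬ ∃ (K : Type) (_ : NormedAddCommGroup K) (_ : InnerProductSpace ℂ K),
      ∃ (β : H) (ρ : K) (f : H → K)
        (U : (H ⊗[ℂ] (H ⊗[ℂ] K)) →ₗ[ℂ] (H ⊗[ℂ] (H ⊗[ℂ] K)))
        (ip : (H ⊗[ℂ] (H ⊗[ℂ] K)) → (H ⊗[ℂ] (H ⊗[ℂ] K)) → ℂ),
        ‖β‖ = 1 ∧ ‖ρ‖ = 1 ∧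
        (∀ ψ : H, ‖ψ‖ = 1 → ‖f ψ‖ = 1) ∧
        (∀ a b a' b' : H, ∀ c c' : K,
          ip (a ⊗ₜ[ℂ] (b ⊗ₜ[ℂ] c)) (a' ⊗ₜ[ℂ] (b' ⊗ₜ[ℂ] c')) = ⟪a, a'⟫ * ⟪b, b'⟫ * ⟪c, c'⟫) ∧
        (∀ s t, ip (U s) (U t) = ip s t) ∧
        (∀ ψ : H, ‖ψ‖ = 1 → U (ψ ⊗ₜ[ℂ] (β ⊗ₜ[ℂ] ρ)) = ψ ⊗ₜ[ℂ] (ψ ⊗ₜ[ℂ] f ψ)) := by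
  rintro ⟨K, _, _, β, ρ, f, U, ip, hβ, hρ, hf, hip, hiso, hU⟩
  obtain ⟨e₁, e₂, he₁, he₂, h12⟩ := exists_ortho_pair' hdim
  set c : ℂ := ((Real.sqrt 2 : ℝ) : ℂ)⁻¹ with hc
  set ψ : H := e₁
  set φ : H := c • (e₁ + e₂) with hφ
  have hsqrt2 : (0:ℝ) < Real.sqrt 2 := Real.sqrt_pos.mpr (by norm_num)
  have hcnorm : ‖c‖ = (Real.sqrt 2)⁻¹ := by
    rw [hc, norm_inv, Complex.norm_real, Real.norm_eq_abs, abs_of_pos hsqrt2]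
  have hcne : c ≠ 0 := by
    rw [hc]
    simp [hsqrt2.ne']
  have hψ : ‖ψ‖ = 1 := he₁
  have hadd : ‖e₁ + e₂‖ = Real.sqrt 2 := by
    have h := norm_add_sq (𝕜 := ℂ) e₁ e₂
    rw [he₁, he₂, h12] at h
    simp at h
    rw [show (2:ℝ) = ‖e₁ + e₂‖^2 by rw [h]; norm_num]
    exact (Real.sqrt_sq (norm_nonneg _)).symm
  have hφn : ‖φ‖ = 1 := by
    rw [hφ, norm_smul, hcnorm, hadd]
    field_simp
  have hinnψφ : ⟪ψ, φ⟫ = c := by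
    rw [hφ, inner_smul_right, inner_add_right, h12,
      inner_self_eq_norm_sq_to_K, he₁]
    norm_num
  have hββ : ⟪β, β⟫ = 1 := by
    rw [inner_self_eq_norm_sq_to_K, hβ]; norm_num
  have hρρ : ⟪ρ, ρ⟫ = 1 := by
    rw [inner_self_eq_norm_sq_to_K, hρ]; norm_num
  have key : c * c * ⟪f ψ, f φ⟫ = c := by
    have h1 := hiso (ψ ⊗ₜ[ℂ] (β ⊗ₜ[ℂ] ρ)) (φ ⊗ₜ[ℂ] (β ⊗ₜ[ℂ] ρ))
    rw [hU ψ hψ, hU φ hφn, hip, hip, hββ, hρρ, hinnψφ] at h1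
    simpa using h1
  have h2 : c * ⟪f ψ, f φ⟫ = 1 :=
    mul_left_cancel₀ hcne (by rw [← mul_assoc, key, mul_one])
  have hCS : ‖⟪f ψ, f φ⟫‖ ≤ 1 := by
    have := norm_inner_le_norm (𝕜 := ℂ) (f ψ) (f φ)
    rwa [hf ψ hψ, hf φ hφn, one_mul] at this
  have : (1:ℝ) ≤ (Real.sqrt 2)⁻¹ := by
    calc (1:ℝ) = ‖(1:ℂ)‖ := by simp
    _ = ‖c‖ * ‖⟪f ψ, f φ⟫‖ := by rw [← h2, norm_mul]
    _ ≤ ‖c‖ * 1 := by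
        exact mul_le_mul_of_nonneg_left hCS (norm_nonneg _)
    _ = (Real.sqrt 2)⁻¹ := by rw [mul_one, hcnorm]
  have h2lt : (Real.sqrt 2)⁻¹ < 1 := by
    rw [inv_lt_one_iff₀]
    right
    nlinarith [Real.sq_sqrt (by norm_num : (2:ℝ) ≥ 0), hsqrt2]
  linarith
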